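/- Let h > 0, 0 ≤ s ≤ h, μ > 0, and let A, B : [0,h] → [0,∞) be continuous with A(τ) ≤ B(τ) for all τ. Set Ā₂ = sup_{τ∈[0,h]} A(τ), Ā₁ = sup_{τ∈[0,h]} B(τ), and assume 2Ā₁ ≠ μ. Define W^∞(t,τ) = exp(−μ(t−τ) + 2∫_τ^t B(σ)dσ), W_∞ = (e^{(2Ā₁−μ)h} − 1)/(2Ā₁ − μ), W̄_∞ = (W_∞ − h)/(2Ā₁ − μ), and W_∞^sup = 1 if μ ≥ 2Ā₁ and e^{(2Ā₁−μ)h} otherwise. Let W_m ≥ 0 and assume κ := 1 − 4 W_m W̄_∞ Ā₂² > 0. Suppose p, q : [s,h] → [0,∞) are continuous and satisfy, for constants P_m, P_∞ ≥ 0 and all t ∈ [s,h]: p(t) ≤ W_m P_m + 2 W_m ∫_s^t A(τ) q(τ) dτ, and q(t) ≤ W^∞(t,s) P_∞ + 2 ∫_s^t W^∞(t,τ) A(τ) p(τ) dτ. Then sup_{t∈[s,h]} p(t) ≤ κ^{−1}(W_m P_m + 2 W_m W_∞ Ā₂ P_∞) and sup_{t∈[s,h]} q(t) ≤ 2 W_m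 W_∞ Ā₂ κ^{−1} P_m + (W_∞^sup + 4 W_m W_∞² Ā₂² κ^{−1}) P_∞. -/
import Mathlib

open Real MeasureTheory intervalIntegral

lemma int_exp_mul' (c : ℝ) (hc : c ≠ 0) (a b : ℝ) :
    ∫ u in a..b, Real.exp (c * u) = (Real.exp (c * b) - Real.exp (c * a)) / c := by
  rw [intervalIntegral.integral_comp_mul_left (fun x => Real.exp x) hc, integral_exp,
    smul_eq_mul]
  ring

set_option maxHeartbeats 1000000 in
/-- Coupled a priori estimate for finite and tail parts of the linearized evolution
(the quantitative core of Theorem 3.1 of the paper). -/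
theorem coupled_finite_tail_estimate
    (h s μ : ℝ) (hh : 0 < h) (hs0 : 0 ≤ s) (hsh : s ≤ h) (hμ : 0 < μ)
    (A B : ℝ → ℝ)
    (hA : ContinuousOn A (Set.Icc 0 h)) (hB : ContinuousOn B (Set.Icc 0 h))
    (hA0 : ∀ τ ∈ Set.Icc (0:ℝ) h, 0 ≤ A τ)
    (hAB : ∀ τ ∈ Set.Icc (0:ℝ) h, A τ ≤ B τ)
    (A₂ A₁ : ℝ)
    (hA₂ : A₂ = sSup (A '' Set.Icc 0 h)) (hA₁ : A₁ = sSup (B '' Set.Icc 0 h))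
    (hne : 2 * A₁ ≠ μ)
    (Winf Wbar Wsup Wm κ : ℝ)
    (hWinf : Winf = (Real.exp ((2 * A₁ - μ) * h) - 1) / (2 * A₁ - μ))
    (hWbar : Wbar = (Winf - h) / (2 * A₁ - μ))
    (hWsup : Wsup = if 2 * A₁ ≤ μ then 1 else Real.exp ((2 * A₁ - μ) * h))
    (hWm : 0 ≤ Wm) (hκ : κ = 1 - 4 * Wm * Wbar * A₂ ^ 2) (hκpos : 0 < κ)
    (p q : ℝ → ℝ)
    (hp : ContinuousOn p (Set.Icc s h)) (hq : ContinuousOn q (Set.Icc s h))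
    (hp0 : ∀ t ∈ Set.Icc s h, 0 ≤ p t) (hq0 : ∀ t ∈ Set.Icc s h, 0 ≤ q t)
    (Pm Pinf : ℝ) (hPm : 0 ≤ Pm) (hPinf : 0 ≤ Pinf)
    (hpb : ∀ t ∈ Set.Icc s h,
      p t ≤ Wm * Pm + 2 * Wm * ∫ τ in s..t, A τ * q τ)
    (hqb : ∀ t ∈ Set.Icc s h,
      q t ≤ Real.exp (-μ * (t - s) + 2 * ∫ σ in s..t, B σ) * Pinf +
        2 * ∫ τ in s..t, Real.exp (-μ * (t - τ) + 2 * ∫ σ in τ..t, B σ) * A τ * p τ) :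
    (∀ t ∈ Set.Icc s h, p t ≤ κ⁻¹ * (Wm * Pm + 2 * Wm * Winf * A₂ * Pinf)) ∧
    (∀ t ∈ Set.Icc s h,
      q t ≤ 2 * Wm * Winf * A₂ * κ⁻¹ * Pm +
        (Wsup + 4 * Wm * Winf ^ 2 * A₂ ^ 2 * κ⁻¹) * Pinf) := by
  set c : ℝ := 2 * A₁ - μ with hcdef
  have hc : c ≠ 0 := sub_ne_zero.mpr hne
  set G : ℝ → ℝ := fun u => (Real.exp (c * u) - 1) / c with hGdef
  have hGcont : Continuous G :=
    ((Real.continuous_exp.comp (continuous_const.mul continuous_id)).sub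
      continuous_const).div_const c
  have hexpint : ∀ a b : ℝ, IntervalIntegrable (fun u => Real.exp (c * u)) volume a b :=
    fun a b => (Real.continuous_exp.comp (continuous_const.mul continuous_id)).intervalIntegrable a b
  have hGint : ∀ v : ℝ, ∫ u in (0:ℝ)..v, Real.exp (c * u) = G v := by
    intro v
    rw [int_exp_mul' c hc]
    simp [hGdef]
  have hG0 : ∀ v : ℝ, 0 ≤ v → 0 ≤ G v := by
    intro v hv
    rw [← hGint v]
    exact intervalIntegral.integral_nonneg hv fun u _ => (Real.exp_pos _).le
  have hGmono : ∀ v : ℝ, 0 ≤ v → v ≤ h → G v ≤ G h := by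
    intro v hv hvh
    have hadd := intervalIntegral.integral_add_adjacent_intervals (hexpint 0 v) (hexpint v h)
    rw [hGint v, hGint h] at hadd
    have h2 : 0 ≤ ∫ u in v..h, Real.exp (c * u) :=
      intervalIntegral.integral_nonneg hvh fun u _ => (Real.exp_pos _).le
    linarith
  have hWinfG : Winf = G h := by rw [hWinf, hGdef]
  have hWinf0 : 0 ≤ Winf := hWinfG ▸ hG0 h hh.le
  have hGIint : ∀ a b : ℝ, IntervalIntegrable G volume a b :=
    fun a b => hGcont.intervalIntegrable a b
  have hHint : ∀ v : ℝ, ∫ u in (0:ℝ)..v, G u = (G v - v) / c := by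
    intro v
    have : (∫ u in (0:ℝ)..v, G u)
        = ∫ u in (0:ℝ)..v, (Real.exp (c * u) - 1) / c := rfl
    rw [this, intervalIntegral.integral_div,
      intervalIntegral.integral_sub (hexpint 0 v) intervalIntegrable_const,
      int_exp_mul' c hc, intervalIntegral.integral_const, smul_eq_mul, mul_one]
    simp only [hGdef, mul_zero, Real.exp_zero, sub_zero]
  have hHintAB : ∀ a b : ℝ, a ≤ b → (∫ u in a..b, G u) = (G b - b) / c - (G a - a) / c := by
    intro a b hab
    have hadd := intervalIntegral.integral_add_adjacent_intervals (hGIint 0 a) (hGIint a b)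
    rw [hHint a, hHint b] at hadd
    linarith
  have hWbarH : Wbar = (G h - h) / c := by rw [hWbar, hWinfG]
  have hHmono : ∀ v : ℝ, 0 ≤ v → v ≤ h → (G v - v) / c ≤ Wbar := by
    intro v hv hvh
    rw [hWbarH]
    have := hHintAB v h hvh
    have h2 : 0 ≤ ∫ u in v..h, G u :=
      intervalIntegral.integral_nonneg hvh fun u hu => hG0 u (hv.trans hu.1)
    linarith
  -- sup bounds
  have hA₂ub : ∀ τ ∈ Set.Icc (0:ℝ) h, A τ ≤ A₂ := by
    intro τ hτ
    rw [hA₂]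
    exact le_csSup (isCompact_Icc.bddAbove_image hA) (Set.mem_image_of_mem _ hτ)
  have hA₁ub : ∀ τ ∈ Set.Icc (0:ℝ) h, B τ ≤ A₁ := by
    intro τ hτ
    rw [hA₁]
    exact le_csSup (isCompact_Icc.bddAbove_image hB) (Set.mem_image_of_mem _ hτ)
  have h0mem : (0:ℝ) ∈ Set.Icc (0:ℝ) h := ⟨le_refl 0, hh.le⟩
  have hA₂0 : 0 ≤ A₂ := (hA0 0 h0mem).trans (hA₂ub 0 h0mem)
  -- exponential kernel bound
  have hEbound : ∀ t ∈ Set.Icc s h, ∀ τ ∈ Set.Icc s t,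
      Real.exp (-μ * (t - τ) + 2 * ∫ σ in τ..t, B σ) ≤ Real.exp (c * (t - τ)) := by
    intro t ht τ hτ
    apply Real.exp_le_exp.mpr
    have hτt : τ ≤ t := hτ.2
    have hsub : Set.Icc τ t ⊆ Set.Icc 0 h :=
      Set.Icc_subset_Icc (hs0.trans hτ.1) ht.2
    have hBint : IntervalIntegrable B volume τ t :=
      (hB.mono (by rwa [Set.uIcc_of_le hτt])).intervalIntegrable
    have hIB : (∫ σ in τ..t, B σ) ≤ ∫ σ in τ..t, A₁ :=
      intervalIntegral.integral_mono_on hτt hBint intervalIntegrable_const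
        fun σ hσ => hA₁ub σ (hsub hσ)
    rw [intervalIntegral.integral_const, smul_eq_mul] at hIB
    have : c * (t - τ) = -μ * (t - τ) + 2 * ((t - τ) * A₁) := by rw [hcdef]; ring
    linarith
  -- maximum of p
  obtain ⟨t₀, ht₀, hmaxOn⟩ := isCompact_Icc.exists_isMaxOn (Set.nonempty_Icc.mpr hsh) hp
  have hmax : ∀ x ∈ Set.Icc s h, p x ≤ p t₀ := fun x hx => hmaxOn hx
  set P : ℝ := p t₀ with hPdef
  have hP0 : 0 ≤ P := hp0 t₀ ht₀
  -- Step A : bound q in terms of P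
  have hqP : ∀ t ∈ Set.Icc s h,
      q t ≤ Real.exp (c * (t - s)) * Pinf + 2 * (A₂ * P * G (t - s)) := by
    intro t ht
    have hst : s ≤ t := ht.1
    have hsub0 : Set.Icc s t ⊆ Set.Icc 0 h := Set.Icc_subset_Icc hs0 ht.2
    have hsubs : Set.Icc s t ⊆ Set.Icc s h := Set.Icc_subset_Icc le_rfl ht.2
    have h1 : Real.exp (-μ * (t - s) + 2 * ∫ σ in s..t, B σ) * Pinf
        ≤ Real.exp (c * (t - s)) * Pinf :=
      mul_le_mul_of_nonneg_right (hEbound t ht s ⟨le_rfl, hst⟩) hPinf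
    -- continuity of the kernel integrand
    have hBIOn : IntegrableOn B (Set.Icc s t) :=
      (hB.mono hsub0).integrableOn_compact isCompact_Icc
    have hprim : ContinuousOn (fun τ => ∫ σ in τ..t, B σ) (Set.Icc s t) := by
      have := intervalIntegral.continuousOn_primitive_interval_left (a := s) (b := t)
        (f := B) (μ := volume) (by rwa [Set.uIcc_of_le hst])
      rwa [Set.uIcc_of_le hst] at this
    have hf : ContinuousOn
        (fun τ => Real.exp (-μ * (t - τ) + 2 * ∫ σ in τ..t, B σ) * A τ * p τ)
        (Set.Icc s t) := by
      refine (ContinuousOn.mul (ContinuousOn.mul ?_ (hA.mono hsub0)) (hp.mono hsubs))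
      exact Real.continuous_exp.comp_continuousOn
        (((continuous_const.mul (continuous_const.sub continuous_id)).continuousOn).add
          (continuousOn_const.mul hprim))
    have hfint : IntervalIntegrable
        (fun τ => Real.exp (-μ * (t - τ) + 2 * ∫ σ in τ..t, B σ) * A τ * p τ)
        volume s t := by
      have hf' : ContinuousOn
          (fun τ => Real.exp (-μ * (t - τ) + 2 * ∫ σ in τ..t, B σ) * A τ * p τ)
          (Set.uIcc s t) := by rw [Set.uIcc_of_le hst]; exact hf
      exact hf'.intervalIntegrable
    have hgint : IntervalIntegrable
        (fun τ => Real.exp (c * (t - τ)) * (A₂ * P)) volume s t :=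
      ((Real.continuous_exp.comp
        (continuous_const.mul (continuous_const.sub continuous_id))).mul
        continuous_const).intervalIntegrable s t
    have hmono : (∫ τ in s..t, Real.exp (-μ * (t - τ) + 2 * ∫ σ in τ..t, B σ) * A τ * p τ)
        ≤ ∫ τ in s..t, Real.exp (c * (t - τ)) * (A₂ * P) := by
      refine intervalIntegral.integral_mono_on hst hfint hgint fun τ hτ => ?_
      have e1 := hEbound t ht τ hτ
      have e2 := hA₂ub τ (hsub0 hτ)
      have e3 := hmax τ (hsubs hτ)
      have e4 := hA0 τ (hsub0 hτ)
      have e5 := hp0 τ (hsubs hτ)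
      calc Real.exp (-μ * (t - τ) + 2 * ∫ σ in τ..t, B σ) * A τ * p τ
          ≤ Real.exp (c * (t - τ)) * A τ * p τ :=
            mul_le_mul_of_nonneg_right (mul_le_mul_of_nonneg_right e1 e4) e5
        _ = Real.exp (c * (t - τ)) * (A τ * p τ) := by ring
        _ ≤ Real.exp (c * (t - τ)) * (A₂ * P) :=
            mul_le_mul_of_nonneg_left (mul_le_mul e2 e3 e5 hA₂0) (Real.exp_pos _).le
    have hgval : (∫ τ in s..t, Real.exp (c * (t - τ)) * (A₂ * P))
        = A₂ * P * G (t - s) := by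
      rw [intervalIntegral.integral_mul_const,
        intervalIntegral.integral_comp_sub_left (fun u => Real.exp (c * u)) t,
        sub_self, hGint]
      ring
    have := hqb t ht
    rw [hgval] at hmono
    linarith
  -- Step B : fixed point inequality at the maximum point
  have hst₀ : s ≤ t₀ := ht₀.1
  have hsub0 : Set.Icc s t₀ ⊆ Set.Icc 0 h := Set.Icc_subset_Icc hs0 ht₀.2
  have hsubs : Set.Icc s t₀ ⊆ Set.Icc s h := Set.Icc_subset_Icc le_rfl ht₀.2
  have hAq_int : IntervalIntegrable (fun τ => A τ * q τ) volume s t₀ := by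
    have hf' : ContinuousOn (fun τ => A τ * q τ) (Set.uIcc s t₀) := by
      rw [Set.uIcc_of_le hst₀]; exact (hA.mono hsub0).mul (hq.mono hsubs)
    exact hf'.intervalIntegrable
  have hg2cont : Continuous
      (fun τ => Real.exp (c * (τ - s)) * Pinf + 2 * (A₂ * P * G (τ - s))) := by
    have h1 : Continuous fun τ : ℝ => Real.exp (c * (τ - s)) :=
      Real.continuous_exp.comp (continuous_const.mul (continuous_id.sub continuous_const))
    have h2 : Continuous fun τ : ℝ => G (τ - s) :=
      hGcont.comp (continuous_id.sub continuous_const)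
    exact (h1.mul continuous_const).add (continuous_const.mul (continuous_const.mul h2))
  have hg2int : IntervalIntegrable
      (fun τ => A₂ * (Real.exp (c * (τ - s)) * Pinf + 2 * (A₂ * P * G (τ - s))))
      volume s t₀ := (continuous_const.mul hg2cont).intervalIntegrable s t₀
  have hImono : (∫ τ in s..t₀, A τ * q τ)
      ≤ ∫ τ in s..t₀, A₂ * (Real.exp (c * (τ - s)) * Pinf + 2 * (A₂ * P * G (τ - s))) := by
    refine intervalIntegral.integral_mono_on hst₀ hAq_int hg2int fun τ hτ => ?_
    exact mul_le_mul (hA₂ub τ (hsub0 hτ)) (hqP τ (hsubs hτ)) (hq0 τ (hsubs hτ)) hA₂0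
  have hIval : (∫ τ in s..t₀, A₂ * (Real.exp (c * (τ - s)) * Pinf + 2 * (A₂ * P * G (τ - s))))
      = A₂ * (G (t₀ - s) * Pinf + 2 * (A₂ * P * ((G (t₀ - s) - (t₀ - s)) / c))) := by
    have hi1 : IntervalIntegrable (fun τ => Real.exp (c * (τ - s)) * Pinf) volume s t₀ :=
      ((Real.continuous_exp.comp
        (continuous_const.mul (continuous_id.sub continuous_const))).mul
        continuous_const).intervalIntegrable s t₀
    have hi2 : IntervalIntegrable (fun τ => 2 * (A₂ * P * G (τ - s))) volume s t₀ :=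
      (continuous_const.mul (continuous_const.mul
        (hGcont.comp (continuous_id.sub continuous_const)))).intervalIntegrable s t₀
    rw [intervalIntegral.integral_const_mul, intervalIntegral.integral_add hi1 hi2,
      intervalIntegral.integral_mul_const, intervalIntegral.integral_const_mul,
      intervalIntegral.integral_const_mul,
      intervalIntegral.integral_comp_sub_right (fun u => Real.exp (c * u)) s,
      intervalIntegral.integral_comp_sub_right G s, sub_self, hGint, hHint]
  have hkey : P ≤ Wm * Pm + 2 * Wm *
      (A₂ * (G (t₀ - s) * Pinf + 2 * (A₂ * P * ((G (t₀ - s) - (t₀ - s)) / c)))) := by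
    have hb := hpb t₀ ht₀
    have hWmI : 2 * Wm * (∫ τ in s..t₀, A τ * q τ) ≤ 2 * Wm *
        (∫ τ in s..t₀, A₂ * (Real.exp (c * (τ - s)) * Pinf + 2 * (A₂ * P * G (τ - s)))) :=
      mul_le_mul_of_nonneg_left hImono (by linarith)
    rw [hIval] at hWmI
    linarith
  -- solve the fixed point inequality
  have hts0 : 0 ≤ t₀ - s := by linarith
  have htsh : t₀ - s ≤ h := by
    have := ht₀.2
    linarith
  have hGle : G (t₀ - s) ≤ Winf := hWinfG ▸ hGmono _ hts0 htsh
  have hGnn : 0 ≤ G (t₀ - s) := hG0 _ hts0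
  have hHle : (G (t₀ - s) - (t₀ - s)) / c ≤ Wbar := hHmono _ hts0 htsh
  have hκP : κ * P ≤ Wm * Pm + 2 * Wm * Winf * A₂ * Pinf := by
    have m1 : 2 * Wm * A₂ * Pinf * G (t₀ - s) ≤ 2 * Wm * A₂ * Pinf * Winf :=
      mul_le_mul_of_nonneg_left hGle (by positivity)
    have m2 : 4 * Wm * A₂ ^ 2 * P * ((G (t₀ - s) - (t₀ - s)) / c)
        ≤ 4 * Wm * A₂ ^ 2 * P * Wbar :=
      mul_le_mul_of_nonneg_left hHle (by positivity)
    have expand : Wm * Pm + 2 * Wm *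
        (A₂ * (G (t₀ - s) * Pinf + 2 * (A₂ * P * ((G (t₀ - s) - (t₀ - s)) / c))))
        = Wm * Pm + 2 * Wm * A₂ * Pinf * G (t₀ - s)
          + 4 * Wm * A₂ ^ 2 * P * ((G (t₀ - s) - (t₀ - s)) / c) := by ring
    have hκP' : κ * P = P - 4 * Wm * Wbar * A₂ ^ 2 * P := by rw [hκ]; ring
    rw [expand] at hkey
    nlinarith [hkey, m1, m2]
  have hPfin : P ≤ κ⁻¹ * (Wm * Pm + 2 * Wm * Winf * A₂ * Pinf) := by
    rw [inv_mul_eq_div, le_div_iff₀ hκpos]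
    linarith [hκP]
  constructor
  · intro t ht
    exact (hmax t ht).trans hPfin
  · intro t ht
    have hq1 := hqP t ht
    have hts0' : 0 ≤ t - s := by linarith [ht.1]
    have htsh' : t - s ≤ h := by linarith [ht.2]
    have hGle' : G (t - s) ≤ Winf := hWinfG ▸ hGmono _ hts0' htsh'
    have hexple : Real.exp (c * (t - s)) ≤ Wsup := by
      rw [hWsup]
      split_ifs with hcase
      · have hcle : c ≤ 0 := by rw [hcdef]; linarith
        exact Real.exp_le_one_iff.mpr (mul_nonpos_of_nonpos_of_nonneg hcle hts0')
      · have hcpos : 0 < c := by rw [hcdef]; push_neg at hcase; linarith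
        exact Real.exp_le_exp.mpr (mul_le_mul_of_nonneg_left htsh' hcpos.le)
    have hb1 : Real.exp (c * (t - s)) * Pinf ≤ Wsup * Pinf :=
      mul_le_mul_of_nonneg_right hexple hPinf
    have hb2 : 2 * (A₂ * P * G (t - s)) ≤ 2 * (A₂ * P * Winf) := by
      have : A₂ * P * G (t - s) ≤ A₂ * P * Winf :=
        mul_le_mul_of_nonneg_left hGle' (by positivity)
      linarith
    have hb3 : 2 * (A₂ * Winf) * P
        ≤ 2 * (A₂ * Winf) * (κ⁻¹ * (Wm * Pm + 2 * Wm * Winf * A₂ * Pinf)) :=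
      mul_le_mul_of_nonneg_left hPfin (by positivity)
    have : q t ≤ Wsup * Pinf + 2 * (A₂ * Winf) * (κ⁻¹ * (Wm * Pm + 2 * Wm * Winf * A₂ * Pinf)) := by
      nlinarith [hq1, hb1, hb2, hb3]
    calc q t ≤ Wsup * Pinf + 2 * (A₂ * Winf) * (κ⁻¹ * (Wm * Pm + 2 * Wm * Winf * A₂ * Pinf)) := this
      _ = 2 * Wm * Winf * A₂ * κ⁻¹ * Pm +
          (Wsup + 4 * Wm * Winf ^ 2 * A₂ ^ 2 * κ⁻¹) * Pinf := by ring
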